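/- For the epistemic space E² = ⟨𝓔₂, mod⟩: AGM contraction is not realizable in E², but AGM revision is realizable in E². -/
import Mathlib


open Set

/-- `minSet r S` is the set of `r`-minimal elements of `S`:
`min(S, r) = {ω ∈ S : r ω ω' for all ω' ∈ S}`. -/
def minSet {Ω : Type*} (r : Ω → Ω → Prop) (S : Set Ω) : Set Ω :=
  {ω ∈ S | ∀ ω' ∈ S, r ω ω'}

/-- A linear order as a relation: total, antisymmetric and transitive. -/
def IsLinRel {Ω : Type*} (r : Ω → Ω → Prop) : Prop :=
  (∀ a b, r a b ∨ r b a) ∧ (∀ a b, r a b → r b a → a = b) ∧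
    (∀ a b c, r a b → r b c → r a c)

/-- AGM contraction operator for the epistemic space `⟨E, md⟩` (postulates C1–C7,
formulated on model sets). -/
def IsContraction {Ω E : Type*} (md : E → Set Ω) (c : E → Set Ω → E) : Prop :=
  ∀ (Ψ : E) (A B : Set Ω),
    md Ψ ⊆ md (c Ψ A) ∧
    (¬ md Ψ ⊆ A → md (c Ψ A) ⊆ md Ψ) ∧
    (A ≠ Set.univ → ¬ md (c Ψ A) ⊆ A) ∧
    md (c Ψ A) ∩ A ⊆ md Ψ ∧
    md (c Ψ (A ∩ B)) ⊆ md (c Ψ A) ∪ md (c Ψ B) ∧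
    (¬ md (c Ψ (A ∩ B)) ⊆ B → md (c Ψ B) ⊆ md (c Ψ (A ∩ B)))

/-- AGM revision operator for the epistemic space `⟨E, md⟩` (postulates R1–R6,
formulated on model sets). -/
def IsRevision {Ω E : Type*} (md : E → Set Ω) (s : E → Set Ω → E) : Prop :=
  ∀ (Ψ : E) (A B : Set Ω),
    md (s Ψ A) ⊆ A ∧
    (md Ψ ∩ A ≠ ∅ → md (s Ψ A) = md Ψ ∩ A) ∧
    (A ≠ ∅ → md (s Ψ A) ≠ ∅) ∧
    md (s Ψ A) ∩ B ⊆ md (s Ψ (A ∩ B)) ∧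
    (md (s Ψ A) ∩ B ≠ ∅ → md (s Ψ (A ∩ B)) ⊆ md (s Ψ A) ∩ B)

/-- Postulate (ZC). -/
def ZC {Ω E : Type*} (md : E → Set Ω) : Prop :=
  ∀ (Ψ : E) (M : Set Ω), md Ψ ⊆ M → ∃ Ψ' : E, md Ψ' = M

/-- Postulate (ZR1). -/
def ZR1 {Ω E : Type*} (md : E → Set Ω) : Prop :=
  ∀ ω : Ω, ∃ Ψ : E, md Ψ = {ω}

/-- Postulate (ZR2). -/
def ZR2 {Ω E : Type*} (md : E → Set Ω) : Prop :=
  ∀ (Ψ : E) (M : Set Ω), M ⊆ md Ψ → ∃ Ψ' : E, md Ψ' = M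

/-- Postulate (Unbiased). -/
def Unbiased {Ω E : Type*} (md : E → Set Ω) : Prop :=
  ∀ M : Set Ω, ∃ Ψ : E, md Ψ = M

/-- Maxichoice contraction operator. -/
def IsMaxichoiceContraction {Ω E : Type*} (md : E → Set Ω) (c : E → Set Ω → E) : Prop :=
  IsContraction md c ∧
    ∀ Ψ : E, ∃ r : Ω → Ω → Prop, IsLinRel r ∧ ∀ A : Set Ω,
      (¬ md Ψ ⊆ A → md (c Ψ A) = md Ψ) ∧
      (md Ψ ⊆ A → md (c Ψ A) = md Ψ ∪ minSet r Aᶜ)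

/-- Linear contraction operator: a maxichoice contraction operator based on one
single linear order for all epistemic states. -/
def IsLinearContraction {Ω E : Type*} (md : E → Set Ω) (c : E → Set Ω → E) : Prop :=
  IsContraction md c ∧
    ∃ r : Ω → Ω → Prop, IsLinRel r ∧ ∀ (Ψ : E) (A : Set Ω),
      (¬ md Ψ ⊆ A → md (c Ψ A) = md Ψ) ∧
      (md Ψ ⊆ A → md (c Ψ A) = md Ψ ∪ minSet r Aᶜ)

/-- Full meet contraction operator. -/
def IsFullMeetContraction {Ω E : Type*} (md : E → Set Ω) (c : E → Set Ω → E) : Prop :=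
  IsContraction md c ∧
    ∀ (Ψ : E) (A : Set Ω),
      (¬ md Ψ ⊆ A → md (c Ψ A) = md Ψ) ∧
      (md Ψ ⊆ A → md (c Ψ A) = md Ψ ∪ Aᶜ)

/-- Maxichoice revision operator. -/
def IsMaxichoiceRevision {Ω E : Type*} (md : E → Set Ω) (s : E → Set Ω → E) : Prop :=
  IsRevision md s ∧
    ∀ Ψ : E, ∃ r : Ω → Ω → Prop, IsLinRel r ∧ ∀ A : Set Ω,
      (md Ψ ∩ A ≠ ∅ → md (s Ψ A) = md Ψ ∩ A) ∧
      (md Ψ ∩ A = ∅ → md (s Ψ A) = minSet r A)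

/-- Linear revision operator: a maxichoice revision operator based on one single
linear order for all epistemic states. -/
def IsLinearRevision {Ω E : Type*} (md : E → Set Ω) (s : E → Set Ω → E) : Prop :=
  IsRevision md s ∧
    ∃ r : Ω → Ω → Prop, IsLinRel r ∧ ∀ (Ψ : E) (A : Set Ω),
      (md Ψ ∩ A ≠ ∅ → md (s Ψ A) = md Ψ ∩ A) ∧
      (md Ψ ∩ A = ∅ → md (s Ψ A) = minSet r A)

/-- Full meet revision operator. -/
def IsFullMeetRevision {Ω E : Type*} (md : E → Set Ω) (s : E → Set Ω → E) : Prop :=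
  IsRevision md s ∧
    ∀ (Ψ : E) (A : Set Ω),
      (md Ψ ∩ A ≠ ∅ → md (s Ψ A) = md Ψ ∩ A) ∧
      (md Ψ ∩ A = ∅ → md (s Ψ A) = A)


/-- The epistemic space `E²` over `Ω₂ = Fin 4` (worlds `ω₁, ω₂, ω₃, ω₄`):
five states `Ψ₁, Ψ₂, Ψ₃, Ψ₄, Ψ_⊥` with `mod Ψᵢ = {ωᵢ}` and `mod Ψ_⊥ = ∅`. -/
def md2 : Fin 5 → Set (Fin 4) := ![{0}, {1}, {2}, {3}, ∅]

open Classical in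
/-- Pick the state whose model set is the singleton of the least element of `A`
(or `Ψ_⊥` if `A = ∅`). -/
noncomputable def fmin (A : Set (Fin 4)) : Fin 5 :=
  if 0 ∈ A then 0 else if 1 ∈ A then 1 else if 2 ∈ A then 2 else if 3 ∈ A then 3 else 4

lemma md2_subsingleton (Ψ : Fin 5) : (md2 Ψ).Subsingleton := by
  fin_cases Ψ
  · simp [md2]
  · simp [md2]
  · simp [md2]
  · simp [md2]
  · simpa [md2] using Set.subsingleton_empty

lemma fmin_sub (A : Set (Fin 4)) : md2 (fmin A) ⊆ A := by
  unfold fmin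
  split_ifs <;> simp_all [md2]

lemma fmin_ne (A : Set (Fin 4)) (hA : A ≠ ∅) : md2 (fmin A) ≠ ∅ := by
  unfold fmin
  split_ifs with h0 h1 h2 h3 <;> simp_all [md2]
  apply hA
  ext x
  fin_cases x <;> simp_all

lemma fmin_min (A : Set (Fin 4)) : ∀ x ∈ A, ∀ y ∈ md2 (fmin A), y ≤ x := by
  intro x hx y hy
  unfold fmin at hy
  split_ifs at hy with h0 h1 h2 h3 <;> simp [md2] at hy <;> subst hy <;>
    fin_cases x <;> first | decide | simp_all

lemma fmin_eq (A : Set (Fin 4)) (a : Fin 4) (ha : a ∈ A) (hmin : ∀ x ∈ A, a ≤ x) :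
    md2 (fmin A) = {a} := by
  have hne : (md2 (fmin A)).Nonempty := by
    rw [Set.nonempty_iff_ne_empty]
    exact fmin_ne A (by intro h; rw [h] at ha; exact ha)
  obtain ⟨y, hy⟩ := hne
  have hya : y = a :=
    le_antisymm (fmin_min A a ha y hy) (hmin y (fmin_sub A hy))
  subst hya
  ext z
  constructor
  · intro hz; exact md2_subsingleton _ hz hy
  · intro hz; rw [Set.mem_singleton_iff] at hz; subst hz; exact hy

/-- AGM contraction is not realizable in `E²`, but AGM revision
is realizable in `E²`. -/
theorem E2_no_contraction_but_revision :
    (¬ ∃ c : Fin 5 → Set (Fin 4) → Fin 5, IsContraction md2 c) ∧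
      (∃ s : Fin 5 → Set (Fin 4) → Fin 5, IsRevision md2 s) := by
  constructor
  · rintro ⟨c, hc⟩
    obtain ⟨h1, _, h3, _⟩ := hc 0 ({0} : Set (Fin 4)) ∅
    have hne : ({0} : Set (Fin 4)) ≠ Set.univ := by
      intro h
      have : (1 : Fin 4) ∈ ({0} : Set (Fin 4)) := h ▸ Set.mem_univ _
      simp at this
    have h3' := h3 hne
    have h0 : (0 : Fin 4) ∈ md2 (c 0 {0}) := h1 (by simp [md2])
    obtain ⟨x, hx, hx0⟩ := Set.not_subset.mp h3'
    have := md2_subsingleton (c 0 {0}) hx h0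
    simp_all
  · classical
    refine ⟨fun Ψ A => if (md2 Ψ ∩ A) ≠ ∅ then Ψ else fmin A, ?_⟩
    intro Ψ A B
    dsimp only
    have key : ∀ C : Set (Fin 4), md2 Ψ ∩ C ≠ ∅ → md2 Ψ ⊆ C := by
      intro C hC
      obtain ⟨x, hxΨ, hxC⟩ := Set.nonempty_iff_ne_empty.mpr hC
      intro y hy
      exact (md2_subsingleton Ψ hy hxΨ) ▸ hxC
    by_cases hA : md2 Ψ ∩ A ≠ ∅
    · have hΨA : md2 Ψ ⊆ A := key A hA
      rw [if_pos hA]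
      refine ⟨Set.subset_inter (fun y hy => hy) hΨA |>.trans Set.inter_subset_right,
        fun _ => (Set.inter_eq_left.mpr hΨA).symm,
        fun _ h => hA (by rw [Set.inter_eq_left.mpr hΨA]; exact h), ?_, ?_⟩
      · -- R5
        intro x hx
        have hAB : md2 Ψ ∩ (A ∩ B) ≠ ∅ := by
          rw [← Set.nonempty_iff_ne_empty]
          exact ⟨x, hx.1, hΨA hx.1, hx.2⟩
        rw [if_pos hAB]
        exact hx.1
      · -- R6
        intro hne
        obtain ⟨x, hxΨ, hxB⟩ := Set.nonempty_iff_ne_empty.mpr hne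
        have hAB : md2 Ψ ∩ (A ∩ B) ≠ ∅ := by
          rw [← Set.nonempty_iff_ne_empty]
          exact ⟨x, hxΨ, hΨA hxΨ, hxB⟩
        rw [if_pos hAB]
        intro y hy
        exact Set.mem_inter hy ((md2_subsingleton Ψ hy hxΨ) ▸ hxB)
    · have hAB0 : ¬ md2 Ψ ∩ (A ∩ B) ≠ ∅ := by
        push_neg at hA ⊢
        apply Set.eq_empty_of_subset_empty
        rw [← hA]
        exact Set.inter_subset_inter_right _ Set.inter_subset_left
      rw [if_neg hA, if_neg hAB0]
      refine ⟨fmin_sub A, fun h => absurd h hA,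
        fun h => fmin_ne A h, ?_, ?_⟩
      · -- R5
        intro x hx
        have hxA : x ∈ A := fmin_sub A hx.1
        have hx_min : ∀ z ∈ A ∩ B, x ≤ z := fun z hz => fmin_min A z hz.1 x hx.1
        rw [fmin_eq (A ∩ B) x ⟨hxA, hx.2⟩ hx_min]
        rfl
      · -- R6
        intro hne
        obtain ⟨x, hx, hxB⟩ := Set.nonempty_iff_ne_empty.mpr hne
        have hxA : x ∈ A := fmin_sub A hx
        have hx_min : ∀ z ∈ A ∩ B, x ≤ z := fun z hz => fmin_min A z hz.1 x hx
        rw [fmin_eq (A ∩ B) x ⟨hxA, hxB⟩ hx_min]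
        intro y hy
        rw [Set.mem_singleton_iff] at hy
        subst hy
        exact ⟨hx, hxB⟩
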